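/- Let S be a finitely generated commutative additive monoid whose only invertible element is 0, and let T be an S-module that is finitely generated over S, such that for all s ∈ S and t ∈ T the equality s•t = t implies s = 0. Then every element of T has finite level: for each t ∈ T there exists h ∈ ℕ such that t cannot be written as (s_1 + s_2 + ⋯ + s_h)•t' with s_1, …, s_h ∈ S \ {0} and t' ∈ T. -/

import Mathlib

/-- Let `S` be a finitely generated commutative additive monoid whose
only invertible element is `0`, and `T` a finitely generated `S`-module for which
`s +ᵥ t = t` forces `s = 0`. Then every element of `T` has finite level: for every
`t` there is `h : ℕ` such that `t` cannot be written as `(s₁ + ⋯ + s_h) +ᵥ t'` with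
all `sᵢ ≠ 0`. -/
theorem stmt_2 {S T : Type*} [AddCommMonoid S] [AddAction S T]
    (hfgS : AddMonoid.FG S)
    (hunit : ∀ s : S, IsAddUnit s → s = 0)
    (k : ℕ) (g : Fin k → T)
    (hgen : ∀ t : T, ∃ (s : S) (i : Fin k), t = s +ᵥ g i)
    (hfix : ∀ (s : S) (t : T), s +ᵥ t = t → s = 0) :
    ∀ t : T, ∃ h : ℕ, ¬ ∃ (s : Fin h → S) (t' : T),
      (∀ i, s i ≠ 0) ∧ t = (∑ i, s i) +ᵥ t' := by
  classical
  obtain ⟨G, hG⟩ := hfgS.fg_top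
  set G' : Finset S := G.erase 0 with hG'def
  have hG'ne : ∀ a ∈ G', a ≠ 0 := fun a ha => Finset.ne_of_mem_erase ha
  -- closure of G' is still everything
  have hG' : AddSubmonoid.closure (G' : Set S) = ⊤ := by
    rw [eq_top_iff, ← hG, AddSubmonoid.closure_le]
    intro a ha
    by_cases h0 : a = 0
    · simp [h0, AddSubmonoid.zero_mem]
    · exact AddSubmonoid.subset_closure (Finset.mem_erase.2 ⟨h0, ha⟩)
  -- representation lemma
  have hrep : ∀ s : S, ∃ c : S → ℕ, s = ∑ a ∈ G', c a • a := by
    intro s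
    have hs : s ∈ AddSubmonoid.closure (G' : Set S) := hG' ▸ AddSubmonoid.mem_top s
    induction hs using AddSubmonoid.closure_induction with
    | mem a ha =>
        refine ⟨fun b => if b = a then 1 else 0, ?_⟩
        show a = ∑ b ∈ G', (if b = a then (1:ℕ) else 0) • b
        rw [Finset.sum_congr rfl (fun b _ => show (if b = a then (1:ℕ) else 0) • b
          = if b = a then b else 0 by split <;> simp)]
        rw [Finset.sum_ite_eq' G' a (fun b => b)]
        rw [if_pos (Finset.mem_coe.mp ha)]
    | zero => exact ⟨fun _ => 0, by simp⟩
    | add x y _ _ hx hy =>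
        obtain ⟨c, hc⟩ := hx
        obtain ⟨d, hd⟩ := hy
        exact ⟨c + d, by simp [hc, hd, add_nsmul, Finset.sum_add_distrib]⟩
  -- a sum of multiples of elements of G' is zero only if all coefficients vanish
  have hzero : ∀ c : S → ℕ, (∑ a ∈ G', c a • a) = 0 → ∀ a ∈ G', c a = 0 := by
    intro c hc a ha
    by_contra hne
    have h1 : c a • a = a + (c a - 1) • a := by
      conv_lhs => rw [show c a = 1 + (c a - 1) by omega]
      rw [add_nsmul, one_nsmul]
    have h2 : (∑ b ∈ G', c b • b) = c a • a + ∑ b ∈ G'.erase a, c b • b :=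
      (Finset.add_sum_erase _ _ ha).symm
    have : a + ((c a - 1) • a + ∑ b ∈ G'.erase a, c b • b) = 0 := by
      rw [← add_assoc, ← h1, ← h2, hc]
    exact hG'ne a ha (hunit a (IsAddUnit.of_add_eq_zero _ this))
  -- a sum of h nonzero elements has a representation with total weight ≥ h
  have hlev : ∀ (h : ℕ) (s : Fin h → S), (∀ i, s i ≠ 0) →
      ∃ c : S → ℕ, (∑ i, s i) = ∑ a ∈ G', c a • a ∧ h ≤ ∑ a ∈ G', c a := by
    intro h
    induction h with
    | zero => intro s _; exact ⟨fun _ => 0, by simp⟩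
    | succ n ih =>
        intro s hs
        obtain ⟨c, hc, hcn⟩ := ih (fun i => s i.succ) (fun i => hs i.succ)
        obtain ⟨d, hd⟩ := hrep (s 0)
        have hd1 : 1 ≤ ∑ a ∈ G', d a := by
          by_contra hlt
          have : ∀ a ∈ G', d a = 0 := by
            intro a ha
            have := Finset.single_le_sum (f := d) (fun b _ => Nat.zero_le _) ha
            omega
          refine absurd ?_ (hs 0)
          rw [hd]
          exact Finset.sum_eq_zero fun a ha => by rw [this a ha, zero_nsmul]
        refine ⟨d + c, ?_, ?_⟩
        · rw [Fin.sum_univ_succ, hd, hc]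
          simp [add_nsmul, Finset.sum_add_distrib]
        · simp only [Pi.add_apply]
          rw [Finset.sum_add_distrib]
          omega
  intro t
  by_contra hcon
  push_neg at hcon
  -- for every h, a representation of t with total weight ≥ h
  have key : ∀ h : ℕ, ∃ (c : S → ℕ) (i : Fin k),
      t = (∑ a ∈ G', c a • a) +ᵥ g i ∧ h ≤ ∑ a ∈ G', c a := by
    intro h
    obtain ⟨s, t', hs, ht⟩ := hcon h
    obtain ⟨s', i, hi⟩ := hgen t'
    obtain ⟨c, hc, hcn⟩ := hlev h s hs
    obtain ⟨d, hd⟩ := hrep s'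
    refine ⟨c + d, i, ?_, ?_⟩
    · rw [ht, hi, ← add_vadd, hc, hd]
      congr 1
      simp [add_nsmul, Finset.sum_add_distrib]
    · simp only [Pi.add_apply]
      rw [Finset.sum_add_distrib]; omega
  choose v I hvI hvtot using key
  -- pigeonhole on the finitely many generators g i
  have : Nonempty (Fin k) := by
    obtain ⟨_, i, _⟩ := hgen t; exact ⟨i⟩
  obtain ⟨i₀, hinf⟩ := Finite.exists_infinite_fiber I
  have hinf' : (setOf fun h => I h = i₀).Infinite := by
    rw [← Set.infinite_coe_iff]; exact hinf
  set e : ℕ → ℕ := Nat.nth (fun h => I h = i₀) with he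
  have heI : ∀ m, I (e m) = i₀ := fun m => Nat.nth_mem_of_infinite hinf' m
  have hemono : StrictMono e := Nat.nth_strictMono hinf'
  -- the sequence of coefficient vectors, restricted to G'
  set F : ℕ → (↥G' → ℕ) := fun m a => v (e m) a with hF
  obtain ⟨φ, hφ⟩ := (Set.isPWO_of_wellQuasiOrderedLE
    (Set.univ : Set (↥G' → ℕ))).exists_monotone_subseq (f := F) (fun _ => Set.mem_univ _)
  -- totals
  have htot : ∀ m, ∑ a ∈ G', v (e (φ m)) a ≥ m := by
    intro m
    calc ∑ a ∈ G', v (e (φ m)) a ≥ e (φ m) := hvtot _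
    _ ≥ φ m := hemono.id_le _
    _ ≥ m := φ.strictMono.id_le m
  set N : ℕ := (∑ a ∈ G', v (e (φ 0)) a) + 1 with hN
  set A : S → ℕ := v (e (φ 0)) with hA
  set B : S → ℕ := v (e (φ N)) with hB
  have hAB : ∀ a ∈ G', A a ≤ B a := by
    intro a ha
    have := hφ (Nat.zero_le N) ⟨a, ha⟩
    simpa [hF] using this
  have hsumlt : (∑ a ∈ G', A a) < ∑ a ∈ G', B a := by
    have h := htot N
    rw [← hB] at h
    have h0 := hN
    omega
  -- the difference vector
  set w : S → ℕ := fun a => B a - A a with hw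
  have hBsplit : (∑ a ∈ G', B a • a) = (∑ a ∈ G', w a • a) + ∑ a ∈ G', A a • a := by
    rw [← Finset.sum_add_distrib]
    refine Finset.sum_congr rfl fun a ha => ?_
    rw [← add_nsmul]
    congr 1
    have := hAB a ha
    simp only [hw]
    omega
  have htA : t = (∑ a ∈ G', A a • a) +ᵥ g i₀ := by
    have := hvI (e (φ 0)); rwa [heI] at this
  have htB : t = (∑ a ∈ G', B a • a) +ᵥ g i₀ := by
    have := hvI (e (φ N)); rwa [heI] at this
  have hW : (∑ a ∈ G', w a • a) = 0 := by
    apply hfix _ t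
    conv_rhs => rw [htB, hBsplit, add_vadd, ← htA]
  have : ∀ a ∈ G', w a = 0 := hzero w hW
  have : (∑ a ∈ G', B a) = ∑ a ∈ G', A a := by
    refine Finset.sum_congr rfl fun a ha => ?_
    have h1 := this a ha
    have h2 := hAB a ha
    simp only [hw] at h1
    omega
  omega
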